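/- Let x be a solution of ẍ(t) + (α/t)ẋ(t) + ∇_x f̃(x(t),μ(t)) = 0 with α > 0, inf f > −∞, and ∫_{t₀}^∞ t μ(t) dt < ∞. Then lim_{t→∞} f(x(t)) = inf f and lim_{t→∞} ‖ẋ(t)‖ = 0. -/

import Mathlib

open MeasureTheory Filter Asymptotics Set
open scoped RealInnerProductSpace Topology

set_option linter.unusedSectionVars false
set_option maxHeartbeats 1000000

section Aux

variable {H : Type*} [NormedAddCommGroup H] [InnerProductSpace ℝ H] [CompleteSpace H]

lemma aux_subgrad {φ : H → ℝ} (hφ : ConvexOn ℝ Set.univ φ) {p g : H}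
    (hg : HasGradientAt φ g p) (z : H) : φ p + ⟪g, z - p⟫ ≤ φ z := by
  have hc : HasDerivAt (fun s : ℝ => s • (z - p) + p) (z - p) 0 := by
    simpa using ((hasDerivAt_id (0 : ℝ)).smul_const (z - p)).add_const p
  have hd : HasDerivAt (fun s : ℝ => φ (s • (z - p) + p)) ⟪g, z - p⟫ 0 := by
    have h0 : (0 : ℝ) • (z - p) + p = p := by simp
    have hfd : HasFDerivAt φ (InnerProductSpace.toDual ℝ H g) ((0 : ℝ) • (z - p) + p) := by
      rw [h0]; exact hg.hasFDerivAt
    have := hfd.comp_hasDerivAt 0 hc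
    simpa [InnerProductSpace.toDual_apply_apply, Function.comp_def] using this
  have hq : ConvexOn ℝ Set.univ (fun s : ℝ => φ (s • (z - p) + p)) := by
    have := hφ.comp_affineMap (AffineMap.lineMap p z : ℝ →ᵃ[ℝ] H)
    simpa [Function.comp_def, AffineMap.lineMap_apply, vsub_eq_sub, vadd_eq_add] using this
  have hslope := hq.le_slope_of_hasDerivAt (Set.mem_univ (0 : ℝ)) (Set.mem_univ 1) one_pos hd
  rw [slope_def_field] at hslope
  simp only [one_smul, zero_smul, zero_add, sub_add_cancel] at hslope
  have : ⟪g, z - p⟫ ≤ φ z - φ p := by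
    calc ⟪g, z - p⟫ ≤ (φ z - φ p) / (1 - 0) := hslope
    _ = φ z - φ p := by norm_num
  linarith

omit [CompleteSpace H] in
lemma aux_lip {ftil : H → ℝ → ℝ} {dmu : H → ℝ → ℝ} {κ : ℝ}
    (hdmu : ∀ (z : H) (m : ℝ), 0 < m → HasDerivAt (fun m' => ftil z m') (dmu z m) m)
    (hdmubd : ∀ (z : H) (m : ℝ), 0 < m → |dmu z m| ≤ κ)
    (w : H) {m₁ m₂ : ℝ} (h₁ : 0 < m₁) (h₂ : 0 < m₂) :
    |ftil w m₁ - ftil w m₂| ≤ κ * |m₁ - m₂| := by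
  have := (convex_Ioi (0 : ℝ)).norm_image_sub_le_of_norm_hasDerivWithin_le
    (f := fun m => ftil w m) (f' := fun m => dmu w m)
    (fun m hm => (hdmu w m hm).hasDerivWithinAt)
    (fun m hm => by simpa [Real.norm_eq_abs] using hdmubd w m hm) h₂ h₁
  simpa [Real.norm_eq_abs] using this

end Aux

theorem stmt8 {H : Type*} [NormedAddCommGroup H] [InnerProductSpace ℝ H] [CompleteSpace H]
    (f : H → ℝ) (hf : ConvexOn ℝ Set.univ f)
    (ftil : H → ℝ → ℝ) (κ : ℝ) (hκ : 0 < κ)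
    (hconv : ∀ m : ℝ, 0 < m → ConvexOn ℝ Set.univ (fun z => ftil z m))
    (dmu : H → ℝ → ℝ)
    (hdmu : ∀ (z : H) (m : ℝ), 0 < m → HasDerivAt (fun m' => ftil z m') (dmu z m) m)
    (hdmubd : ∀ (z : H) (m : ℝ), 0 < m → |dmu z m| ≤ κ)
    (happrox : ∀ (z : H) (m : ℝ), 0 < m → |ftil z m - f z| ≤ κ * m)
    (G : H → ℝ → H)
    (hG : ∀ (z : H) (m : ℝ), 0 < m → HasGradientAt (fun w => ftil w m) (G z m) z)
    (t₀ α : ℝ) (ht₀ : 0 < t₀) (hα : 0 < α)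
    (μ μ' : ℝ → ℝ) (hμpos : ∀ t, t₀ ≤ t → 0 < μ t)
    (hμderiv : ∀ t, t₀ ≤ t → HasDerivAt μ (μ' t) t)
    (hμdec : ∀ t, t₀ ≤ t → μ' t ≤ 0)
    (hμlim : Filter.Tendsto μ Filter.atTop (nhds 0))
    (x x' x'' : ℝ → H)
    (hx : ∀ t, t₀ ≤ t → HasDerivAt x (x' t) t)
    (hx' : ∀ t, t₀ ≤ t → HasDerivAt x' (x'' t) t)
    (heq : ∀ t, t₀ ≤ t → x'' t + (α / t) • x' t + G (x t) (μ t) = 0)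
    (hH1 : MeasureTheory.IntegrableOn (fun t => t * μ t) (Set.Ici t₀))
    (hbdd : BddBelow (Set.range f)) :
    Filter.Tendsto (fun t => f (x t)) Filter.atTop (nhds (⨅ y : H, f y)) ∧
      Filter.Tendsto (fun t => ‖x' t‖) Filter.atTop (nhds 0) := by
  -- notation and basic facts
  set mstar : ℝ := ⨅ y : H, f y with hmstar_def
  have hms_le : ∀ y : H, mstar ≤ f y := fun y => ciInf_le hbdd y
  set K : ℝ → ℝ := fun t => ⟪x' t, x' t⟫ with hK_def
  clear_value K
  have hKnonneg : ∀ t, 0 ≤ K t := fun t => by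
    simp only [hK_def]; exact real_inner_self_nonneg
  have hKnorm : ∀ t, K t = ‖x' t‖ ^ 2 := fun t => by
    simp only [hK_def]; exact real_inner_self_eq_norm_sq _
  have hKderiv : ∀ t, t₀ ≤ t → HasDerivAt K (2 * ⟪x'' t, x' t⟫) t := by
    intro t ht
    have := (hx' t ht).inner ℝ (hx' t ht)
    simpa [hK_def, real_inner_comm, two_mul] using this
  have hKcont : ∀ t, t₀ ≤ t → ContinuousAt K t := fun t ht => (hKderiv t ht).continuousAt
  have hμcont : ∀ t, t₀ ≤ t → ContinuousAt μ t := fun t ht => (hμderiv t ht).continuousAt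
  have hμanti : AntitoneOn μ (Ici t₀) := by
    apply antitoneOn_of_deriv_nonpos (convex_Ici t₀)
    · exact fun t ht => (hμcont t ht).continuousWithinAt
    · intro t ht
      rw [interior_Ici] at ht
      exact (hμderiv t ht.le).differentiableAt.differentiableWithinAt
    · intro t ht
      rw [interior_Ici] at ht
      rw [(hμderiv t ht.le).deriv]
      exact hμdec t ht.le
  set A : ℝ → ℝ := fun t => ftil (x t) (μ t) with hA_def
  clear_value A
  set Q : ℝ → ℝ := fun t => A t + K t / 2 + κ * μ t with hQ_def
  have hQpt : ∀ s, Q s = A s + K s / 2 + κ * μ s := fun s => by rw [hQ_def]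
  clear_value Q
  have happx : ∀ t, t₀ ≤ t → |A t - f (x t)| ≤ κ * μ t := fun t ht => by
    simp only [hA_def]; exact happrox (x t) (μ t) (hμpos t ht)
  have hfxQ : ∀ t, t₀ ≤ t → f (x t) + K t / 2 ≤ Q t := by
    intro t ht
    have h := abs_le.mp (happx t ht)
    simp only [hQ_def]
    linarith [h.1]
  have hQm : ∀ t, t₀ ≤ t → mstar ≤ Q t := by
    intro t ht
    calc mstar ≤ f (x t) := hms_le _
    _ ≤ f (x t) + K t / 2 := by linarith [hKnonneg t]
    _ ≤ Q t := hfxQ t ht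
  -- continuity of Q on [t₀, ∞)
  have hQcont : ContinuousOn Q (Ici t₀) := by
    intro t ht
    have ht' : t₀ ≤ t := ht
    have hψ : ContinuousAt (fun s => ftil (x s) (μ t)) t := by
      have h1 : ContinuousAt (fun w => ftil w (μ t)) (x t) :=
        (hG (x t) (μ t) (hμpos t ht')).differentiableAt.continuousAt
      exact h1.comp (hx t ht').continuousAt
    have hAt : Tendsto A (𝓝[Ici t₀] t) (𝓝 (A t)) := by
      have h1 : Tendsto (fun s => ftil (x s) (μ t)) (𝓝[Ici t₀] t) (𝓝 (A t)) := by
        rw [hA_def]; exact hψ.continuousWithinAt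
      have h2 : Tendsto (fun s => A s - ftil (x s) (μ t)) (𝓝[Ici t₀] t) (𝓝 0) := by
        refine squeeze_zero_norm' (a := fun s => κ * |μ s - μ t|) ?_ ?_
        · filter_upwards [eventually_mem_nhdsWithin] with s hs
          simpa [Real.norm_eq_abs, hA_def] using
            aux_lip hdmu hdmubd (x s) (hμpos s hs) (hμpos t ht')
        · have : Tendsto (fun s => κ * |μ s - μ t|) (𝓝 t) (𝓝 (κ * |μ t - μ t|)) := by
            apply Tendsto.const_mul
            exact ((hμcont t ht').sub tendsto_const_nhds).abs
          simpa using this.mono_left nhdsWithin_le_nhds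
      have := h1.add h2
      simpa using this
    have hQt : Tendsto Q (𝓝[Ici t₀] t) (𝓝 (Q t)) := by
      have hKt : Tendsto (fun s => K s / 2) (𝓝[Ici t₀] t) (𝓝 (K t / 2)) :=
        ((hKcont t ht').tendsto.mono_left nhdsWithin_le_nhds).div_const 2
      have hμt : Tendsto (fun s => κ * μ s) (𝓝[Ici t₀] t) (𝓝 (κ * μ t)) :=
        (((hμcont t ht').tendsto.mono_left nhdsWithin_le_nhds)).const_mul κ
      have := (hAt.add hKt).add hμt
      rw [hQ_def]
      exact this
    exact hQt
  -- the dissipation integrand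
  set ρ : ℝ → ℝ := fun s => (α / s) * K s with hρ_def
  have hρpt : ∀ s, ρ s = (α / s) * K s := fun s => by rw [hρ_def]
  clear_value ρ
  have hρcont : ∀ s, t₀ ≤ s → ContinuousAt ρ s := by
    intro s hs
    have hs0 : s ≠ 0 := ne_of_gt (lt_of_lt_of_le ht₀ hs)
    rw [hρ_def]
    exact (continuousAt_const.div continuousAt_id hs0).mul (hKcont s hs)
  have hρnonneg : ∀ s, t₀ ≤ s → 0 ≤ ρ s := by
    intro s hs
    rw [hρpt s]
    exact mul_nonneg (div_nonneg hα.le (le_trans ht₀.le hs)) (hKnonneg s)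
  have hINT : ∀ (w : ℝ → ℝ), (∀ s, t₀ ≤ s → ContinuousAt w s) →
      ∀ {a b : ℝ}, t₀ ≤ a → a ≤ b → IntervalIntegrable w volume a b := by
    intro w hw a b ha hab
    apply ContinuousOn.intervalIntegrable
    intro s hs
    rw [uIcc_of_le hab] at hs
    exact (hw s (le_trans ha hs.1)).continuousWithinAt
  have hFTC : ∀ (w : ℝ → ℝ), (∀ s, t₀ ≤ s → ContinuousAt w s) →
      ∀ {a u : ℝ}, t₀ ≤ a → a ≤ u →
      HasDerivWithinAt (fun r => ∫ s in a..r, w s) (w u) (Ici u) u := by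
    intro w hw a u ha hu
    have hu0 : t₀ ≤ u := le_trans ha hu
    refine intervalIntegral.integral_hasDerivWithinAt_right (hINT w hw ha hu)
      ⟨Ioi u, self_mem_nhdsWithin, ?_⟩ ((hw u hu0).continuousWithinAt)
    apply ContinuousOn.aestronglyMeasurable _ measurableSet_Ioi
    intro s hs
    exact (hw s (le_trans hu0 (le_of_lt hs))).continuousWithinAt
  have hρint : ∀ {a b : ℝ}, t₀ ≤ a → a ≤ b → IntervalIntegrable ρ volume a b :=
    fun ha hab => hINT ρ hρcont ha hab
  have hIderiv : ∀ {a u : ℝ}, t₀ ≤ a → a ≤ u →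
      HasDerivWithinAt (fun r => ∫ s in a..r, ρ s) (ρ u) (Ici u) u :=
    fun ha hu => hFTC ρ hρcont ha hu
  -- energy estimate
  have hE : ∀ a b : ℝ, t₀ ≤ a → a ≤ b → Q b + ∫ s in a..b, ρ s ≤ Q a := by
    intro a b ha hab
    set F : ℝ → ℝ := fun r => Q r + ∫ s in a..r, ρ s with hF_def
    clear_value F
    have key : ∀ ⦃r : ℝ⦄, r ∈ Icc a b → F r ≤ Q a := by
      apply image_le_of_liminf_slope_right_le_deriv_boundary
        (B := fun _ => Q a) (B' := fun _ => (0 : ℝ))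
      · rw [hF_def]
        apply ContinuousOn.add
        · exact hQcont.mono (Icc_subset_Ici_self.trans (Ici_subset_Ici.2 ha))
        · have := intervalIntegral.continuousOn_primitive_interval'
            (μ := volume) (f := ρ) (hρint ha hab) left_mem_uIcc
          exact this.mono (by rw [uIcc_of_le hab])
      · simp [hF_def, intervalIntegral.integral_same]
      · exact continuousOn_const
      · exact fun r _ => hasDerivWithinAt_const _ _ _
      · intro t ht r hr
        have ht0 : t₀ ≤ t := le_trans ha ht.1
        set g : ℝ → ℝ := fun u => ftil (x u) (μ t) + K u / 2 + ∫ s in a..u, ρ s with hg_def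
        clear_value g
        have hgd : HasDerivWithinAt g 0 (Ici t) t := by
          have d1 : HasDerivAt (fun u => ftil (x u) (μ t)) ⟪G (x t) (μ t), x' t⟫ t := by
            have := (hG (x t) (μ t) (hμpos t ht0)).hasFDerivAt.comp_hasDerivAt t (hx t ht0)
            simpa [InnerProductSpace.toDual_apply_apply, Function.comp_def] using this
          have d2 : HasDerivAt (fun u => K u / 2) ⟪x'' t, x' t⟫ t := by
            have := (hKderiv t ht0).div_const 2
            simpa using this
          have d3 := hIderiv ha ht.1
          have sum := ((d1.add d2).hasDerivWithinAt.add d3)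
          have hzero : (⟪G (x t) (μ t), x' t⟫ + ⟪x'' t, x' t⟫) + ρ t = 0 := by
            have h0 := heq t ht0
            have hin : ⟪x'' t + (α / t) • x' t + G (x t) (μ t), x' t⟫ = (0 : ℝ) := by
              rw [h0, inner_zero_left]
            rw [inner_add_left, inner_add_left, real_inner_smul_left] at hin
            simp only [hρ_def, hK_def]
            linarith
          rw [hzero] at sum
          rw [hg_def]
          exact sum
        have hcmp : ∀ u ∈ Ioi t, slope F t u ≤ slope g t u := by
          intro u hu
          have hu0 : t₀ ≤ u := le_trans ht0 (le_of_lt hu)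
          rw [slope_def_field, slope_def_field]
          have hnum : F u - F t ≤ g u - g t := by
            have habs := abs_le.mp
              (aux_lip hdmu hdmubd (x u) (hμpos u hu0) (hμpos t ht0))
            have hmono : μ u ≤ μ t := hμanti (mem_Ici.2 ht0) (mem_Ici.2 hu0) (le_of_lt hu)
            have habs2 : ftil (x u) (μ u) - ftil (x u) (μ t) ≤ κ * (μ t - μ u) := by
              have := habs.2
              have hrw : |μ u - μ t| = μ t - μ u := by
                rw [abs_of_nonpos (by linarith)]; ring
              rw [hrw] at this
              linarith
            simp only [hF_def, hQ_def, hg_def, hA_def]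
            ring_nf
            nlinarith [habs2]
          have hden : (0:ℝ) < u - t := sub_pos.2 hu
          exact (div_le_div_iff_of_pos_right hden).2 hnum
        have hfreq := hgd.liminf_right_slope_le hr
        refine hfreq.mp (eventually_mem_nhdsWithin.mono ?_)
        intro u hu hlt
        exact lt_of_le_of_lt (hcmp u hu) hlt
    have := key (right_mem_Icc.2 hab)
    simpa [hF_def] using this
  -- antitonicity of Q and its limit L
  have hQanti : ∀ a b : ℝ, t₀ ≤ a → a ≤ b → Q b ≤ Q a := by
    intro a b ha hab
    have hint : 0 ≤ ∫ s in a..b, ρ s :=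
      intervalIntegral.integral_nonneg hab (fun s hs => hρnonneg s (le_trans ha hs.1))
    have := hE a b ha hab
    linarith
  have hQne : (Q '' Ici t₀).Nonempty := ⟨Q t₀, t₀, mem_Ici.2 le_rfl, rfl⟩
  have hQbdd : ∀ y ∈ Q '' Ici t₀, mstar ≤ y := by
    rintro y ⟨t, ht, rfl⟩; exact hQm t ht
  set L : ℝ := sInf (Q '' Ici t₀) with hL_def
  clear_value L
  have hLle : ∀ t, t₀ ≤ t → L ≤ Q t := fun t ht => by
    rw [hL_def]; exact csInf_le ⟨mstar, hQbdd⟩ ⟨t, ht, rfl⟩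
  have hmL : mstar ≤ L := by rw [hL_def]; exact le_csInf hQne hQbdd
  have hQtend : Tendsto Q atTop (𝓝 L) := by
    rw [tendsto_order]
    constructor
    · intro l hl
      filter_upwards [eventually_ge_atTop t₀] with t ht
      exact lt_of_lt_of_le hl (hLle t ht)
    · intro u hu
      obtain ⟨y, ⟨t₁, ht₁, rfl⟩, hy⟩ := exists_lt_of_csInf_lt hQne (by rwa [← hL_def])
      filter_upwards [eventually_ge_atTop (max t₀ t₁)] with t ht
      have h1 : Q t ≤ Q t₁ := hQanti t₁ t ht₁ (le_trans (le_max_right _ _) ht)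
      exact lt_of_le_of_lt h1 hy
  -- L ≤ mstar via the h-function argument
  have hLm : L ≤ mstar := by
    by_contra hcon
    push_neg at hcon
    obtain ⟨z, hz⟩ : ∃ z : H, f z < L := exists_lt_of_ciInf_lt hcon
    set δ : ℝ := L - f z with hδ_def
    clear_value δ
    have hδ : 0 < δ := by rw [hδ_def]; exact sub_pos.2 hz
    have hα1 : (0:ℝ) < α + 1 := by linarith
    -- choose T
    have hev1 : ∀ᶠ s in atTop, μ s < δ / (8 * κ) :=
      hμlim.eventually (gt_mem_nhds (by positivity))
    have hev2 : ∀ᶠ s in atTop, Q s < L + α * δ / (3 * (α + 1)) :=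
      hQtend.eventually (gt_mem_nhds (by nlinarith [hδ, hα1, mul_pos hα hδ, div_pos (mul_pos hα hδ) (by linarith : (0:ℝ) < 3 * (α + 1))]))
    obtain ⟨T, hT⟩ := eventually_atTop.1 ((hev1.and hev2).and (eventually_ge_atTop t₀))
    have hTt0 : t₀ ≤ T := (hT T le_rfl).2
    have hTpos : 0 < T := lt_of_lt_of_le ht₀ hTt0
    -- the h functions
    set p : ℝ → H := fun t => x t - z with hp_def
    clear_value p
    set h1 : ℝ → ℝ := fun t => ⟪x' t, p t⟫ with hh1_def
    clear_value h1
    have hpderiv : ∀ t, t₀ ≤ t → HasDerivAt p (x' t) t := fun t ht => by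
      rw [hp_def]; exact (hx t ht).sub_const z
    have hhderiv : ∀ t, t₀ ≤ t → HasDerivAt (fun u => ⟪p u, p u⟫ / 2) (h1 t) t := by
      intro t ht
      have := ((hpderiv t ht).inner ℝ (hpderiv t ht)).div_const 2
      have h2 : (⟪p t, x' t⟫ + ⟪x' t, p t⟫) / 2 = h1 t := by
        have hcomm : ⟪p t, x' t⟫ = ⟪x' t, p t⟫ := real_inner_comm _ _
        rw [hcomm]; simp only [hh1_def]; ring
      rw [h2] at this
      exact this
    have hh1deriv : ∀ t, t₀ ≤ t → HasDerivAt h1 (⟪x'' t, p t⟫ + K t) t := by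
      intro t ht
      have := (hx' t ht).inner ℝ (hpderiv t ht)
      have h2 : ⟪x' t, x' t⟫ + ⟪x'' t, p t⟫ = ⟪x'' t, p t⟫ + K t := by
        simp [hK_def]; ring
      rw [h2] at this
      rw [hh1_def]
      exact this
    -- the key differential inequality
    have hkey : ∀ t, t₀ ≤ t →
        ⟪x'' t, p t⟫ + K t + (α / t) * h1 t ≤ (3/2) * K t + 2 * κ * μ t - δ := by
      intro t ht
      have hμt := hμpos t ht
      have hsub := aux_subgrad (hconv (μ t) hμt) (hG (x t) (μ t) hμt) z
      have happz := abs_le.mp (happrox z (μ t) hμt)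
      have happx' := abs_le.mp (happx t ht)
      have hvec : x'' t + (α / t) • x' t = -(G (x t) (μ t)) :=
        add_eq_zero_iff_eq_neg.mp (heq t ht)
      have hlin : ⟪x'' t, p t⟫ + (α / t) * h1 t = -⟪G (x t) (μ t), p t⟫ := by
        have : ⟪x'' t + (α / t) • x' t, p t⟫ = ⟪-(G (x t) (μ t)), p t⟫ := by rw [hvec]
        rw [inner_add_left, real_inner_smul_left, inner_neg_left] at this
        simpa [hh1_def] using this
      have hzx : z - x t = -(p t) := by simp [hp_def]
      have hsub2 : -⟪G (x t) (μ t), p t⟫ ≤ ftil z (μ t) - ftil (x t) (μ t) := by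
        have : ⟪G (x t) (μ t), z - x t⟫ = -⟪G (x t) (μ t), p t⟫ := by
          rw [hzx, inner_neg_right]
        linarith [hsub, this.symm.le, this.le]
      have hQt : Q t = ftil (x t) (μ t) + K t / 2 + κ * μ t := by rw [hQpt t, hA_def]
      have hLQ := hLle t ht
      have h5 : ftil z (μ t) ≤ f z + κ * μ t := by linarith [happz.2]
      have h6 : ftil (x t) (μ t) = Q t - K t / 2 - κ * μ t := by linarith [hQt.le, hQt.ge]
      have h7 : -⟪G (x t) (μ t), p t⟫ ≤ f z + 2 * κ * μ t + K t / 2 - L := by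
        rw [h6] at hsub2; linarith
      simp only [hδ_def]
      linarith [hlin, h7]
    -- weighted function g t = t^α * h1 t
    have hgderiv : ∀ t, t₀ ≤ t → HasDerivAt (fun u => u ^ α * h1 u)
        (α * t ^ (α - 1) * h1 t + t ^ α * (⟪x'' t, p t⟫ + K t)) t := by
      intro t ht
      have htne : t ≠ 0 := ne_of_gt (lt_of_lt_of_le ht₀ ht)
      exact (Real.hasDerivAt_rpow_const (Or.inl htne)).mul (hh1deriv t ht)
    set ρ2 : ℝ → ℝ := fun s => s ^ α * ((3/2) * K s + 2 * κ * μ s - δ) with hρ2_def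
    clear_value ρ2
    have hρ2cont : ∀ s, t₀ ≤ s → ContinuousAt ρ2 s := by
      intro s hs
      have hsne : s ≠ 0 := ne_of_gt (lt_of_lt_of_le ht₀ hs)
      rw [hρ2_def]
      exact (Real.continuousAt_rpow_const s α (Or.inl hsne)).mul
        ((((hKcont s hs).const_mul _).add ((hμcont s hs).const_mul _)).sub continuousAt_const)
    have hg'le : ∀ t, t₀ ≤ t →
        α * t ^ (α - 1) * h1 t + t ^ α * (⟪x'' t, p t⟫ + K t) ≤ ρ2 t := by
      intro t ht
      have htpos : 0 < t := lt_of_lt_of_le ht₀ ht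
      have h1eq : t ^ (α - 1) = t ^ α / t := by
        rw [Real.rpow_sub htpos, Real.rpow_one]
      have hcal : α * t ^ (α - 1) * h1 t + t ^ α * (⟪x'' t, p t⟫ + K t)
          = t ^ α * ((α / t) * h1 t + (⟪x'' t, p t⟫ + K t)) := by
        rw [h1eq]; field_simp
      rw [hcal, hρ2_def]
      apply mul_le_mul_of_nonneg_left _ (Real.rpow_nonneg htpos.le α)
      have hk := hkey t ht
      linarith
    -- integrate g' ≤ ρ2 on [T, t]
    have hgint : ∀ t, T ≤ t → t ^ α * h1 t ≤ T ^ α * h1 T + ∫ s in T..t, ρ2 s := by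
      intro b hb
      have := image_le_of_deriv_right_le_deriv_boundary
        (f := fun u => u ^ α * h1 u)
        (f' := fun u => α * u ^ (α - 1) * h1 u + u ^ α * (⟪x'' u, p u⟫ + K u))
        (a := T) (b := b)
        (B := fun u => T ^ α * h1 T + ∫ s in T..u, ρ2 s) (B' := ρ2)
        ?_ ?_ ?_ ?_ ?_ ?_ (right_mem_Icc.2 hb)
      · exact this
      · intro u hu
        exact ((hgderiv u (le_trans hTt0 hu.1)).continuousAt).continuousWithinAt
      · intro u hu
        exact (hgderiv u (le_trans hTt0 hu.1)).hasDerivWithinAt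
      · simp
      · apply ContinuousOn.add continuousOn_const
        have := intervalIntegral.continuousOn_primitive_interval'
          (μ := volume) (f := ρ2) (hINT ρ2 hρ2cont hTt0 hb) left_mem_uIcc
        exact this.mono (by rw [uIcc_of_le hb])
      · intro u hu
        exact (hFTC ρ2 hρ2cont hTt0 hu.1).const_add (T ^ α * h1 T)
      · intro u hu
        exact hg'le u (le_trans hTt0 hu.1)
    -- bound the integral of ρ2
    have hIbound : ∀ t, T ≤ t → (∫ s in T..t, ρ2 s) ≤
        (3 / (2 * α)) * t ^ (α + 1) * (α * δ / (3 * (α + 1)))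
          - (3 * δ / 4) * ((t ^ (α + 1) - T ^ (α + 1)) / (α + 1)) := by
      intro t ht
      have htt0 : t₀ ≤ t := le_trans hTt0 ht
      have htpos : 0 < t := lt_of_lt_of_le ht₀ htt0
      set σ : ℝ → ℝ := fun s => (3 / (2 * α)) * t ^ (α + 1) * ρ s + (-(3 * δ / 4)) * s ^ α
        with hσ_def
      clear_value σ
      have hσcont : ∀ s, t₀ ≤ s → ContinuousAt σ s := by
        intro s hs
        have hsne : s ≠ 0 := ne_of_gt (lt_of_lt_of_le ht₀ hs)
        rw [hσ_def]
        exact ((hρcont s hs).const_mul _).add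
          ((Real.continuousAt_rpow_const s α (Or.inl hsne)).const_mul _)
      have hptwise : ∀ s ∈ Icc T t, ρ2 s ≤ σ s := by
        intro s hs
        have hst0 : t₀ ≤ s := le_trans hTt0 hs.1
        have hspos : 0 < s := lt_of_lt_of_le ht₀ hst0
        have hμs : μ s < δ / (8 * κ) := (hT s hs.1).1.1
        have hsa : s ^ α * s = s ^ (α + 1) := by
          rw [Real.rpow_add_one (ne_of_gt hspos)]
        have hpow : s ^ (α + 1) ≤ t ^ (α + 1) :=
          Real.rpow_le_rpow hspos.le hs.2 (by linarith)
        have hpos1 : (0:ℝ) ≤ s ^ α := Real.rpow_nonneg hspos.le α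
        -- first piece
        have hfirst : s ^ α * ((3/2) * K s) ≤ (3 / (2 * α)) * t ^ (α + 1) * ρ s := by
          have hρs := hρpt s
          have hKs := hKnonneg s
          have e1 : s ^ α * ((3/2) * K s) = (3 / (2 * α)) * s ^ (α + 1) * ((α / s) * K s) := by
            rw [← hsa]; field_simp
          rw [e1, hρs]
          have hρsn : 0 ≤ (α / s) * K s := by rw [← hρpt s]; exact hρnonneg s hst0
          have := mul_le_mul_of_nonneg_right
            (mul_le_mul_of_nonneg_left hpow (by positivity : (0:ℝ) ≤ 3 / (2 * α)))
            hρsn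
          linarith [this]
        -- second piece
        have hsecond : s ^ α * (2 * κ * μ s - δ) ≤ (-(3 * δ / 4)) * s ^ α := by
          have h2κ : 2 * κ * μ s - δ ≤ -(3 * δ / 4) := by
            have : 2 * κ * μ s < 2 * κ * (δ / (8 * κ)) :=
              (mul_lt_mul_iff_right₀ (by positivity)).2 hμs
            have heq2 : 2 * κ * (δ / (8 * κ)) = δ / 4 := by field_simp; ring
            nlinarith
          nlinarith
        have : ρ2 s = s ^ α * ((3/2) * K s) + s ^ α * (2 * κ * μ s - δ) := by
          simp only [hρ2_def]; ring
        rw [this, hσ_def]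
        have := add_le_add hfirst hsecond
        linarith
      have hmono := intervalIntegral.integral_mono_on ht
        (hINT ρ2 hρ2cont hTt0 ht) (hINT σ hσcont hTt0 ht) hptwise
      -- compute / bound ∫ σ
      have hsplit : (∫ s in T..t, σ s) =
          (3 / (2 * α)) * t ^ (α + 1) * (∫ s in T..t, ρ s)
            + (-(3 * δ / 4)) * ((t ^ (α + 1) - T ^ (α + 1)) / (α + 1)) := by
        have hint1 := hρint hTt0 ht
        have hintp : IntervalIntegrable (fun s : ℝ => s ^ α) volume T t := by
          apply hINT _ _ hTt0 ht
          intro s hs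
          exact Real.continuousAt_rpow_const s α (Or.inl (ne_of_gt (lt_of_lt_of_le ht₀ hs)))
        rw [hσ_def]
        rw [intervalIntegral.integral_add (hint1.const_mul _) (hintp.const_mul _),
          intervalIntegral.integral_const_mul, intervalIntegral.integral_const_mul,
          integral_rpow (Or.inl (by linarith : (-1:ℝ) < α))]
      have hρbound : (∫ s in T..t, ρ s) ≤ α * δ / (3 * (α + 1)) := by
        have hEt := hE T t hTt0 ht
        have hQT : Q T < L + α * δ / (3 * (α + 1)) := (hT T le_rfl).1.2
        have := hLle t htt0
        linarith
      have hcoef : (0:ℝ) ≤ (3 / (2 * α)) * t ^ (α + 1) := by positivity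
      calc (∫ s in T..t, ρ2 s) ≤ ∫ s in T..t, σ s := hmono
      _ = (3 / (2 * α)) * t ^ (α + 1) * (∫ s in T..t, ρ s)
            + (-(3 * δ / 4)) * ((t ^ (α + 1) - T ^ (α + 1)) / (α + 1)) := hsplit
      _ ≤ (3 / (2 * α)) * t ^ (α + 1) * (α * δ / (3 * (α + 1)))
            + (-(3 * δ / 4)) * ((t ^ (α + 1) - T ^ (α + 1)) / (α + 1)) := by
          have := mul_le_mul_of_nonneg_left hρbound hcoef
          linarith
      _ = (3 / (2 * α)) * t ^ (α + 1) * (α * δ / (3 * (α + 1)))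
            - (3 * δ / 4) * ((t ^ (α + 1) - T ^ (α + 1)) / (α + 1)) := by ring
    -- conclude: g t ≤ C1 - c t^(α+1)
    set c : ℝ := δ / (4 * (α + 1)) with hc_def
    clear_value c
    have hcpos : 0 < c := by rw [hc_def]; positivity
    set C1 : ℝ := T ^ α * h1 T + (3 * δ / 4) * (T ^ (α + 1) / (α + 1)) with hC1_def
    clear_value C1
    have hgb : ∀ t, T ≤ t → t ^ α * h1 t ≤ C1 - c * t ^ (α + 1) := by
      intro t ht
      have h1' := hgint t ht
      have h2' := hIbound t ht
      have hcal : (3 / (2 * α)) * t ^ (α + 1) * (α * δ / (3 * (α + 1)))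
          - (3 * δ / 4) * ((t ^ (α + 1) - T ^ (α + 1)) / (α + 1))
          = - c * t ^ (α + 1) + (3 * δ / 4) * (T ^ (α + 1) / (α + 1)) := by
        rw [hc_def]; field_simp; ring
      rw [hcal] at h2'
      simp only [hC1_def]
      linarith
    -- h1 t ≤ -1 eventually
    set T2 : ℝ := max (max T 1) ((|C1| + 1) / c) with hT2_def
    clear_value T2
    have hT2ge : max (max T 1) ((|C1| + 1) / c) ≤ T2 := le_of_eq hT2_def.symm
    have hT2T : T ≤ T2 := le_trans (le_trans (le_max_left T 1) (le_max_left _ _)) hT2ge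
    have hT2t0 : t₀ ≤ T2 := le_trans hTt0 hT2T
    have hh1neg : ∀ t, T2 ≤ t → h1 t ≤ -1 := by
      intro t ht2
      have htT : T ≤ t := le_trans hT2T ht2
      have ht1 : (1:ℝ) ≤ t := le_trans (le_trans (le_max_right T 1) (le_max_left _ _)) (le_trans hT2ge ht2)
      have htpos : (0:ℝ) < t := by linarith
      have htc : (|C1| + 1) / c ≤ t := le_trans (le_max_right _ _) (le_trans hT2ge ht2)
      have hct : |C1| + 1 ≤ c * t := by
        rw [div_le_iff₀ hcpos] at htc; linarith
      have hta : (1:ℝ) ≤ t ^ α := by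
        calc (1:ℝ) = 1 ^ α := (Real.one_rpow α).symm
        _ ≤ t ^ α := Real.rpow_le_rpow zero_le_one ht1 hα.le
      have htapos : (0:ℝ) < t ^ α := by linarith
      have hsa : t ^ (α + 1) = t ^ α * t := Real.rpow_add_one (ne_of_gt htpos) α
      have hkey2 := hgb t htT
      rw [hsa] at hkey2
      have hC1a : C1 ≤ |C1| * t ^ α :=
        le_trans (le_abs_self C1) (le_mul_of_one_le_right (abs_nonneg _) hta)
      have hfin : t ^ α * h1 t ≤ t ^ α * (-1) := by nlinarith
      exact le_of_mul_le_mul_left (by linarith [hfin]) htapos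
    -- integrate h1 ≤ -1 to contradict nonnegativity of ⟪p, p⟫/2
    set b : ℝ := T2 + (⟪p T2, p T2⟫ / 2 + 1) with hb_def
    clear_value b
    have hpb : (0:ℝ) ≤ ⟪p T2, p T2⟫ := real_inner_self_nonneg
    have hbT2 : T2 ≤ b := by rw [hb_def]; linarith
    have hfinal := image_le_of_deriv_right_le_deriv_boundary
      (f := fun u => ⟪p u, p u⟫ / 2) (f' := h1) (a := T2) (b := b)
      (B := fun u => ⟪p T2, p T2⟫ / 2 + (-1) * (u - T2)) (B' := fun _ => (-1:ℝ))
      ?_ ?_ ?_ ?_ ?_ ?_ (right_mem_Icc.2 hbT2)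
    · have hble : ⟪p b, p b⟫ / 2 ≤ ⟪p T2, p T2⟫ / 2 + (-1) * (b - T2) := hfinal
      have hbpos : (0:ℝ) ≤ ⟪p b, p b⟫ := real_inner_self_nonneg
      rw [hb_def] at hble
      nlinarith
    · intro u hu
      exact ((hhderiv u (le_trans hT2t0 hu.1)).continuousAt).continuousWithinAt
    · intro u hu
      exact (hhderiv u (le_trans hT2t0 hu.1)).hasDerivWithinAt
    · simp
    · exact continuousOn_const.add ((continuousOn_id.sub continuousOn_const).const_smul (-1:ℝ))
    · intro u hu
      have : HasDerivAt (fun v => ⟪p T2, p T2⟫ / 2 + (-1) * (v - T2)) (-1) u := by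
        simpa using (((hasDerivAt_id u).sub_const T2).const_mul (-1:ℝ)).const_add
          (⟪p T2, p T2⟫ / 2)
      exact this.hasDerivWithinAt
    · intro u hu
      exact hh1neg u hu.1
  have hLeq : L = mstar := le_antisymm hLm hmL
  -- final conclusions
  constructor
  · have hup : ∀ᶠ t in atTop, f (x t) ≤ Q t := by
      filter_upwards [eventually_ge_atTop t₀] with t ht
      linarith [hfxQ t ht, hKnonneg t]
    have hlow : ∀ᶠ t in atTop, mstar ≤ f (x t) := Eventually.of_forall fun t => hms_le _
    exact tendsto_of_tendsto_of_tendsto_of_le_of_le'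
      tendsto_const_nhds (hLeq ▸ hQtend) hlow hup
  · have hK0 : Tendsto K atTop (𝓝 0) := by
      have hub : ∀ᶠ t in atTop, K t ≤ 2 * (Q t - mstar) := by
        filter_upwards [eventually_ge_atTop t₀] with t ht
        have h := abs_le.mp (happx t ht)
        have hms := hms_le (x t)
        have hqt := hQpt t
        linarith [h.1]
      have hlb : ∀ᶠ t in atTop, (0:ℝ) ≤ K t := Eventually.of_forall hKnonneg
      have h2 : Tendsto (fun t => 2 * (Q t - mstar)) atTop (𝓝 (2 * (L - mstar))) :=
        ((hQtend.sub tendsto_const_nhds).const_mul 2)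
      rw [hLeq, sub_self, mul_zero] at h2
      exact tendsto_of_tendsto_of_tendsto_of_le_of_le'
        tendsto_const_nhds h2 hlb hub
    have hnorm : (fun t => ‖x' t‖) = fun t => Real.sqrt (K t) := by
      funext t; rw [hKnorm t, Real.sqrt_sq (norm_nonneg _)]
    rw [hnorm]
    have := (Real.continuous_sqrt.continuousAt (x := (0:ℝ))).tendsto.comp hK0
    simpa [Function.comp_def] using this
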